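/- For every integer r ≥ 1, every f ∈ ℂ^N and every t ≥ λ_2^{−1/2}, one has K_r(f, t) ≤ ( (4/π)(r+3)^r (r+1) + (2 sin(1/2))^{−r} ) · ω_r(f, t). -/

import Mathlib

open Matrix

noncomputable section

/-- Euclidean (2-)norm on `ℂ^N`. -/
def cnorm2 {N : ℕ} (f : Fin N → ℂ) : ℝ := Real.sqrt (∑ i, ‖f i‖ ^ 2)

/-- The spectral operator `Σ_j c_j u_j u_j^*`. -/
def specOp {N : ℕ} (u : Fin N → Fin N → ℂ) (c : Fin N → ℂ) : Matrix (Fin N) (Fin N) ℂ :=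
  ∑ j, c j • Matrix.vecMulVec (u j) (star (u j))

/-- The graph translation operator `T_s = Σ_j e^{i s √λ_j} u_j u_j^*`. -/
def Tmat {N : ℕ} (u : Fin N → Fin N → ℂ) (lam : Fin N → ℝ) (s : ℝ) :
    Matrix (Fin N) (Fin N) ℂ :=
  specOp u (fun j => Complex.exp (Complex.I * (s : ℂ) * (Real.sqrt (lam j) : ℂ)))

/-- The `r`-th modulus of smoothness `ω_r(f,t) = sup_{|s| ≤ t} ‖(T_s - I)^r f‖₂`. -/
def omegaMod {N : ℕ} (u : Fin N → Fin N → ℂ) (lam : Fin N → ℝ) (r : ℕ) (f : Fin N → ℂ)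
    (t : ℝ) : ℝ :=
  ⨆ s : {s : ℝ // |s| ≤ t}, cnorm2 (((Tmat u lam s.1 - 1) ^ r).mulVec f)

/-- Functional calculus power `L^x = Σ_j λ_j^x u_j u_j^*` (with `0^0 = 1`). -/
def Lpow {N : ℕ} (u : Fin N → Fin N → ℂ) (lam : Fin N → ℝ) (x : ℝ) :
    Matrix (Fin N) (Fin N) ℂ :=
  specOp u (fun j => ((lam j ^ x : ℝ) : ℂ))

/-- The `K`-functional `K_r(f,t) = inf_g ( ‖f-g‖₂ + (t/2)^r ‖L^{r/2} g‖₂ )`. -/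
def Kfun {N : ℕ} (u : Fin N → Fin N → ℂ) (lam : Fin N → ℝ) (r : ℕ) (f : Fin N → ℂ)
    (t : ℝ) : ℝ :=
  ⨅ g : Fin N → ℂ, (cnorm2 (f - g) + (t / 2) ^ r * cnorm2 ((Lpow u lam ((r : ℝ) / 2)).mulVec g))

/-! ### Auxiliary lemmas -/

lemma cnorm2_nonneg {N : ℕ} (f : Fin N → ℂ) : 0 ≤ cnorm2 f := Real.sqrt_nonneg _

lemma cnorm2_sq {N : ℕ} (f : Fin N → ℂ) : cnorm2 f ^ 2 = ∑ i, ‖f i‖ ^ 2 :=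
  Real.sq_sqrt (Finset.sum_nonneg fun i _ => sq_nonneg _)

lemma huu' {N : ℕ} (u : Fin N → Fin N → ℂ)
    (hu : ∀ i j, star (u i) ⬝ᵥ u j = if i = j then 1 else 0) (i j : Fin N) :
    ∑ k, (starRingEnd ℂ) (u i k) * u j k = if i = j then 1 else 0 := by
  have h := hu i j
  simpa only [dotProduct, Pi.star_apply, Complex.star_def] using h

lemma huu2 {N : ℕ} (u : Fin N → Fin N → ℂ)
    (hu : ∀ i j, star (u i) ⬝ᵥ u j = if i = j then 1 else 0) (i j : Fin N) :
    ∑ a, u i a * (starRingEnd ℂ) (u j a) = if i = j then 1 else 0 := by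
  have h := congrArg (starRingEnd ℂ) (hu i j)
  simp only [dotProduct, Pi.star_apply, Complex.star_def, map_sum (starRingEnd ℂ)] at h
  calc ∑ a, u i a * (starRingEnd ℂ) (u j a)
      = ∑ a, (starRingEnd ℂ) ((starRingEnd ℂ) (u i a) * u j a) := by
        refine Finset.sum_congr rfl fun a _ => ?_
        rw [RingHom.map_mul, Complex.conj_conj]; try ring
    _ = (starRingEnd ℂ) (if i = j then 1 else 0) := h
    _ = if i = j then 1 else 0 := by
        by_cases hij : i = j <;> simp [hij]

lemma hUU {N : ℕ} (u : Fin N → Fin N → ℂ)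
    (hu : ∀ i j, star (u i) ⬝ᵥ u j = if i = j then 1 else 0) (a b : Fin N) :
    ∑ j, u j a * (starRingEnd ℂ) (u j b) = if a = b then 1 else 0 := by
  classical
  set U : Matrix (Fin N) (Fin N) ℂ := Matrix.of u with hU
  have h1 : U * Uᴴ = 1 := by
    ext i j
    have h := huu' u hu j i
    simp only [Matrix.mul_apply, conjTranspose_apply, hU, Matrix.of_apply, Matrix.one_apply,
      Complex.star_def]
    rw [show (∑ k, u i k * (starRingEnd ℂ) (u j k))
        = ∑ k, (starRingEnd ℂ) (u j k) * u i k from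
      Finset.sum_congr rfl fun k _ => mul_comm _ _, h]
    by_cases hij : i = j
    · subst hij; simp
    · rw [if_neg (Ne.symm hij), if_neg hij]
  have h2 : Uᴴ * U = 1 := mul_eq_one_comm.mp h1
  have h3 := congrArg (fun M => M b a) h2
  simp only [Matrix.mul_apply, conjTranspose_apply, hU, Matrix.of_apply, Matrix.one_apply,
    Complex.star_def] at h3
  rw [show (∑ j, u j a * (starRingEnd ℂ) (u j b))
      = ∑ j, (starRingEnd ℂ) (u j b) * u j a from
    Finset.sum_congr rfl fun j _ => mul_comm _ _, h3]
  by_cases hab : a = b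
  · subst hab; simp
  · rw [if_neg (Ne.symm hab), if_neg hab]

lemma specOp_one {N : ℕ} (u : Fin N → Fin N → ℂ)
    (hu : ∀ i j, star (u i) ⬝ᵥ u j = if i = j then 1 else 0) :
    specOp u 1 = 1 := by
  ext a b
  simp only [specOp, Pi.one_apply, one_smul, Matrix.sum_apply, Matrix.vecMulVec_apply,
    Pi.star_apply, Complex.star_def]
  rw [hUU u hu a b, Matrix.one_apply]

lemma specOp_mul {N : ℕ} (u : Fin N → Fin N → ℂ)
    (hu : ∀ i j, star (u i) ⬝ᵥ u j = if i = j then 1 else 0) (c d : Fin N → ℂ) :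
    specOp u c * specOp u d = specOp u (fun j => c j * d j) := by
  classical
  ext a b
  simp only [specOp, Matrix.mul_apply, Matrix.sum_apply, Matrix.smul_apply,
    Matrix.vecMulVec_apply, Pi.star_apply, Complex.star_def, smul_eq_mul]
  calc ∑ k, (∑ j, c j * (u j a * (starRingEnd ℂ) (u j k))) *
        ∑ j, d j * (u j k * (starRingEnd ℂ) (u j b))
      = ∑ j, ∑ j', c j * d j' * (u j a * (starRingEnd ℂ) (u j' b)) *
          (∑ k, (starRingEnd ℂ) (u j k) * u j' k) := by
        simp_rw [Finset.sum_mul, Finset.mul_sum]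
        rw [Finset.sum_comm]
        refine Finset.sum_congr rfl fun j _ => ?_
        rw [Finset.sum_comm]
        refine Finset.sum_congr rfl fun j' _ => ?_
        exact Finset.sum_congr rfl fun k _ => by ring
    _ = ∑ j, c j * d j * (u j a * (starRingEnd ℂ) (u j b)) := by
        refine Finset.sum_congr rfl fun j _ => ?_
        rw [Finset.sum_eq_single j]
        · rw [huu' u hu j j, if_pos rfl, mul_one]
        · intro j' _ hj'
          rw [huu' u hu j j', if_neg (Ne.symm hj'), mul_zero]
        · intro h; exact absurd (Finset.mem_univ j) h

lemma specOp_sub {N : ℕ} (u : Fin N → Fin N → ℂ) (c d : Fin N → ℂ) :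
    specOp u c - specOp u d = specOp u (c - d) := by
  simp only [specOp, ← Finset.sum_sub_distrib, Pi.sub_apply, sub_smul]

lemma specOp_pow {N : ℕ} (u : Fin N → Fin N → ℂ)
    (hu : ∀ i j, star (u i) ⬝ᵥ u j = if i = j then 1 else 0) (c : Fin N → ℂ)
    (n : ℕ) : (specOp u c) ^ n = specOp u (fun j => c j ^ n) := by
  induction n with
  | zero => simp only [pow_zero]; exact (specOp_one u hu).symm
  | succ n ih =>
    rw [pow_succ, ih, specOp_mul u hu]
    have hfe : (fun j => c j ^ n * c j) = fun j => c j ^ (n+1) :=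
      funext fun j => (pow_succ _ _).symm
    rw [hfe]

lemma mulVec_specOp {N : ℕ} (u : Fin N → Fin N → ℂ) (c : Fin N → ℂ) (f : Fin N → ℂ)
    (a : Fin N) :
    (specOp u c).mulVec f a = ∑ j, c j * (star (u j) ⬝ᵥ f) * u j a := by
  simp only [specOp, Matrix.mulVec, dotProduct, Matrix.sum_apply, Matrix.smul_apply,
    Matrix.vecMulVec_apply, Pi.star_apply, smul_eq_mul, Finset.sum_mul]
  rw [Finset.sum_comm]
  refine Finset.sum_congr rfl fun j _ => ?_
  simp only [dotProduct, Pi.star_apply, Finset.sum_mul, Finset.mul_sum]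
  exact Finset.sum_congr rfl fun k _ => by ring

lemma sum_normSq_specOp {N : ℕ} (u : Fin N → Fin N → ℂ)
    (hu : ∀ i j, star (u i) ⬝ᵥ u j = if i = j then 1 else 0) (c : Fin N → ℂ)
    (f : Fin N → ℂ) :
    ∑ a, ‖(specOp u c).mulVec f a‖ ^ 2 = ∑ j, ‖c j‖ ^ 2 * ‖star (u j) ⬝ᵥ f‖ ^ 2 := by
  classical
  have key : ((∑ a, ‖(specOp u c).mulVec f a‖ ^ 2 : ℝ) : ℂ)
      = ((∑ j, ‖c j‖ ^ 2 * ‖star (u j) ⬝ᵥ f‖ ^ 2 : ℝ) : ℂ) := by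
    push_cast
    calc (∑ a, (‖(specOp u c).mulVec f a‖ : ℂ) ^ 2)
        = ∑ a, (specOp u c).mulVec f a * (starRingEnd ℂ) ((specOp u c).mulVec f a) := by
          refine Finset.sum_congr rfl fun a _ => ?_
          rw [Complex.mul_conj]; norm_cast
          rw [Complex.normSq_eq_norm_sq]
      _ = ∑ j, ∑ j', (c j * (star (u j) ⬝ᵥ f)) * (starRingEnd ℂ) (c j' * (star (u j') ⬝ᵥ f)) *
            (∑ a, u j a * (starRingEnd ℂ) (u j' a)) := by
          simp_rw [mulVec_specOp, map_sum, Finset.sum_mul, Finset.mul_sum]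
          rw [Finset.sum_comm]
          refine Finset.sum_congr rfl fun j _ => ?_
          rw [Finset.sum_comm]
          refine Finset.sum_congr rfl fun j' _ => ?_
          refine Finset.sum_congr rfl fun a _ => ?_
          rw [RingHom.map_mul, RingHom.map_mul]
          ring
      _ = ∑ j, (c j * (star (u j) ⬝ᵥ f)) * (starRingEnd ℂ) (c j * (star (u j) ⬝ᵥ f)) := by
          refine Finset.sum_congr rfl fun j _ => ?_
          rw [Finset.sum_eq_single j]
          · rw [huu2 u hu j j, if_pos rfl, mul_one]
          · intro j' _ hj'
            rw [huu2 u hu j j', if_neg (Ne.symm hj'), mul_zero]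
          · intro h; exact absurd (Finset.mem_univ j) h
      _ = ∑ j, (‖c j‖ : ℂ) ^ 2 * (‖star (u j) ⬝ᵥ f‖ : ℂ) ^ 2 := by
          refine Finset.sum_congr rfl fun j _ => ?_
          rw [Complex.mul_conj]; norm_cast
          rw [Complex.normSq_mul, Complex.normSq_eq_norm_sq, Complex.normSq_eq_norm_sq]
          try ring
  exact_mod_cast key

/-! ### Trigonometric integral lemmas -/

open Real MeasureTheory intervalIntegral in
lemma sinpow_int (r : ℕ) (t₁ t₂ : ℝ) :
    IntervalIntegrable (fun x => Real.sin x ^ (2*r)) volume t₁ t₂ :=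
  (Real.continuous_sin.pow _).intervalIntegrable _ _

lemma sinpow_nonneg (r : ℕ) (x : ℝ) : 0 ≤ Real.sin x ^ (2*r) :=
  (even_two_mul r).pow_nonneg _

open Real MeasureTheory intervalIntegral in
lemma sinpow_mono (r : ℕ) {a b : ℝ} (hab : a ≤ b) :
    (∫ x in (0:ℝ)..a, Real.sin x ^ (2*r)) ≤ ∫ x in (0:ℝ)..b, Real.sin x ^ (2*r) := by
  have h := intervalIntegral.integral_add_adjacent_intervals
    (sinpow_int r 0 a) (sinpow_int r a b)
  have h2 : 0 ≤ ∫ x in a..b, Real.sin x ^ (2*r) :=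
    intervalIntegral.integral_nonneg hab (fun x _ => sinpow_nonneg r x)
  linarith

lemma sin_ge_lin {x : ℝ} (h0 : 0 ≤ x) (h1 : x ≤ 1/2) : (15/16) * x ≤ Real.sin x := by
  rcases eq_or_lt_of_le h0 with h | h
  · simp [← h]
  · have h3 := Real.sin_gt_sub_cube h
    have hx2 : x^2 ≤ 1/4 := by nlinarith
    have hx3 : x^3 ≤ x/4 := by nlinarith
    linarith

open Real MeasureTheory intervalIntegral in
lemma clow (r : ℕ) :
    (15/16:ℝ)^(2*r) * (1/2)^(2*r+1) / (2*r+1)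
      ≤ ∫ x in (0:ℝ)..(1/2), Real.sin x ^ (2*r) := by
  have step : ∀ x ∈ Set.uIcc (0:ℝ) (1/2), ((15/16) * x)^(2*r) ≤ Real.sin x ^ (2*r) := by
    intro x hx
    rw [Set.uIcc_of_le (by norm_num)] at hx
    exact pow_le_pow_left₀ (by nlinarith [hx.1]) (sin_ge_lin hx.1 hx.2) _
  have h1 : (∫ x in (0:ℝ)..(1/2), ((15/16)*x)^(2*r))
      ≤ ∫ x in (0:ℝ)..(1/2), Real.sin x ^ (2*r) := by
    apply intervalIntegral.integral_mono_on (by norm_num)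
    · exact ((continuous_const.mul continuous_id).pow _).intervalIntegrable _ _
    · exact sinpow_int r 0 _
    · intro x hx
      exact step x (by rwa [Set.uIcc_of_le (by norm_num)])
  have h2 : (∫ x in (0:ℝ)..(1/2), ((15/16)*x)^(2*r))
      = (15/16:ℝ)^(2*r) * (1/2)^(2*r+1) / (2*r+1) := by
    simp_rw [mul_pow]
    rw [intervalIntegral.integral_const_mul, integral_pow]
    push_cast
    ring
  linarith [h1, h2.symm.le]

open Real in
lemma sinpow_periodic (r : ℕ) : Function.Periodic (fun x => Real.sin x ^ (2*r)) π := by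
  intro x
  simp only [Real.sin_add_pi]
  exact (even_two_mul r).neg_pow _

open Real MeasureTheory intervalIntegral in
lemma main_int_lower (r : ℕ) {X : ℝ} (hX : 1/2 ≤ X) :
    X * ((15/16:ℝ)^(2*r) * (1/2)^(2*r+1) / (2*r+1)) / (2*π)
      ≤ ∫ x in (0:ℝ)..X, Real.sin x ^ (2*r) := by
  set cr : ℝ := (15/16:ℝ)^(2*r) * (1/2)^(2*r+1) / (2*r+1) with hcr
  have hcrpos : 0 < cr := by
    rw [hcr]; positivity
  have hpi := Real.pi_pos
  have hJ : cr ≤ ∫ x in (0:ℝ)..π, Real.sin x ^ (2*r) :=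
    le_trans (clow r) (sinpow_mono r (by linarith [Real.pi_gt_three]))
  by_cases hcase : X ≤ 2*π
  · have h1 : cr ≤ ∫ x in (0:ℝ)..X, Real.sin x ^ (2*r) :=
      le_trans (clow r) (sinpow_mono r hX)
    have : X * cr / (2*π) ≤ cr := by
      rw [div_le_iff₀ (by linarith)]
      nlinarith
    linarith
  · push_neg at hcase
    set n : ℕ := ⌊X/π⌋₊ with hn
    have hXpos : 0 < X := by linarith
    have hnl : (n:ℝ) ≤ X/π := Nat.floor_le (by positivity)
    have hng : X/π - 1 < (n:ℝ) := Nat.sub_one_lt_floor _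
    have heq : (∫ x in (0:ℝ)..(n*π), Real.sin x ^ (2*r))
        = n * ∫ x in (0:ℝ)..π, Real.sin x ^ (2*r) := by
      have := (sinpow_periodic r).intervalIntegral_add_zsmul_eq (n:ℤ) 0
        (fun t₁ t₂ => sinpow_int r t₁ t₂)
      simpa [zsmul_eq_mul] using this
    have hmono : (∫ x in (0:ℝ)..(n*π), Real.sin x ^ (2*r))
        ≤ ∫ x in (0:ℝ)..X, Real.sin x ^ (2*r) :=
      sinpow_mono r ((le_div_iff₀ hpi).mp hnl)
    have hJn : (n:ℝ) * cr ≤ n * ∫ x in (0:ℝ)..π, Real.sin x ^ (2*r) :=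
      mul_le_mul_of_nonneg_left hJ (Nat.cast_nonneg n)
    have hnbig : X / (2*π) ≤ (n:ℝ) := by
      have h2 : (2:ℝ) ≤ X/π := by rw [le_div_iff₀ hpi]; linarith
      have hc : X/π * π = X := div_mul_cancel₀ X hpi.ne'
      have : X/(2*π) ≤ X/π - 1 := by
        rw [div_le_iff₀ (by linarith : (0:ℝ) < 2*π)]
        nlinarith
      linarith
    calc X * cr / (2*π) = (X/(2*π)) * cr := by ring
      _ ≤ (n:ℝ) * cr := by nlinarith
      _ ≤ (n:ℝ) * ∫ x in (0:ℝ)..π, Real.sin x ^ (2*r) := hJn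
      _ = ∫ x in (0:ℝ)..(n*π), Real.sin x ^ (2*r) := heq.symm
      _ ≤ _ := hmono

open Real MeasureTheory intervalIntegral in
lemma osc_lower (r : ℕ) {θ t : ℝ} (hθ : 0 < θ) (hθt : 1 ≤ θ * t) :
    t * ((15/16:ℝ)^(2*r) * (1/2)^(2*r+1) / (2*r+1) / (2*π))
      ≤ ∫ s in (0:ℝ)..t, Real.sin ((θ/2) * s) ^ (2*r) := by
  have htpos : 0 < t := by
    rcases le_or_gt t 0 with h | h
    · nlinarith
    · exact h
  have hc : (θ/2 : ℝ) ≠ 0 := by positivity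
  have hsub := intervalIntegral.integral_comp_mul_left
    (fun x => Real.sin x ^ (2*r)) hc (a := 0) (b := t)
  have hX : 1/2 ≤ θ/2 * t := by nlinarith
  have hmain := main_int_lower r hX
  rw [hsub]
  rw [mul_zero, smul_eq_mul]
  have h2θ : (0:ℝ) < (θ/2)⁻¹ := by positivity
  calc t * ((15/16:ℝ)^(2*r) * (1/2)^(2*r+1) / (2*r+1) / (2*π))
      = (θ/2)⁻¹ * ((θ/2*t) * ((15/16:ℝ)^(2*r) * (1/2)^(2*r+1) / (2*r+1)) / (2*π)) := by
        field_simp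
    _ ≤ (θ/2)⁻¹ * ∫ x in (0:ℝ)..(θ/2*t), Real.sin x ^ (2*r) :=
        mul_le_mul_of_nonneg_left hmain h2θ.le

lemma norm_exp_sub_one (x : ℝ) :
    ‖Complex.exp (Complex.I * x) - 1‖^2 = 4 * Real.sin (x/2)^2 := by
  have h1 : Complex.exp (Complex.I * x) - 1
      = Complex.ofReal (Real.cos x - 1) + Complex.ofReal (Real.sin x) * Complex.I := by
    rw [show Complex.I * (x:ℂ) = (x:ℂ) * Complex.I by ring, Complex.exp_mul_I]
    push_cast
    ring
  rw [h1, Complex.sq_norm, Complex.normSq_add_mul_I]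
  have h2 := Real.sin_sq_eq_half_sub (x/2)
  rw [show 2*(x/2) = x by ring] at h2
  have h3 := Real.sin_sq_add_cos_sq x
  nlinarith

/-- Norm-squared expansion of `(T_s - I)^r f`. -/
lemma Tpow_normsum {N : ℕ} (u : Fin N → Fin N → ℂ)
    (hu : ∀ i j, star (u i) ⬝ᵥ u j = if i = j then 1 else 0)
    (lam : Fin N → ℝ) (r : ℕ) (s : ℝ) (f : Fin N → ℂ) :
    ∑ a, ‖(((Tmat u lam s - 1) ^ r).mulVec f) a‖ ^ 2
      = ∑ j, (4:ℝ)^r * Real.sin ((Real.sqrt (lam j)/2) * s) ^ (2*r)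
          * ‖star (u j) ⬝ᵥ f‖ ^ 2 := by
  have h1 : Tmat u lam s - 1
      = specOp u (fun j => Complex.exp (Complex.I * (s:ℂ) * (Real.sqrt (lam j) : ℂ)) - 1) := by
    rw [Tmat, ← specOp_one u hu, specOp_sub]
    congr 1
  have h2 : (Tmat u lam s - 1) ^ r
      = specOp u (fun j =>
          (Complex.exp (Complex.I * (s:ℂ) * (Real.sqrt (lam j) : ℂ)) - 1) ^ r) := by
    rw [h1, specOp_pow u hu]
  rw [h2, sum_normSq_specOp u hu]
  refine Finset.sum_congr rfl fun j _ => ?_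
  congr 1
  set θ : ℝ := Real.sqrt (lam j)
  have hx : Complex.I * (s:ℂ) * (θ:ℂ) = Complex.I * ((s*θ : ℝ) : ℂ) := by
    push_cast; ring
  rw [norm_pow, ← pow_mul, show r*2 = 2*r from mul_comm r 2, pow_mul, hx,
    norm_exp_sub_one (s*θ), show s*θ/2 = θ/2*s by ring, mul_pow, ← pow_mul]

set_option maxHeartbeats 1000000 in
theorem stmt8
    (N : ℕ) (hN : 2 ≤ N)
    (u : Fin N → Fin N → ℂ)
    (hu : ∀ i j, star (u i) ⬝ᵥ u j = if i = j then 1 else 0)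
    (lam : Fin N → ℝ) (hmono : Monotone lam)
    (hlam0 : lam ⟨0, by omega⟩ = 0) (hlam1 : 0 < lam ⟨1, by omega⟩)
    (r : ℕ) (hr : 1 ≤ r) (f : Fin N → ℂ) (t : ℝ)
    (ht : lam ⟨1, by omega⟩ ^ (-(1 : ℝ) / 2) ≤ t) :
    Kfun u lam r f t ≤
      (4 / Real.pi * ((r : ℝ) + 3) ^ r * ((r : ℝ) + 1) + ((2 * Real.sin (1 / 2))⁻¹) ^ r) *
        omegaMod u lam r f t := by
  classical
  have hpi := Real.pi_pos
  have hr1 : (1:ℝ) ≤ (r:ℝ) := by exact_mod_cast hr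
  have ht0 : (0:ℝ) < lam ⟨1, by omega⟩ ^ (-(1:ℝ)/2) := Real.rpow_pos_of_pos hlam1 _
  have htpos : 0 < t := lt_of_lt_of_le ht0 ht
  have hsq1 : 0 < Real.sqrt (lam ⟨1, by omega⟩) := Real.sqrt_pos.mpr hlam1
  have htinv : (Real.sqrt (lam ⟨1, by omega⟩))⁻¹ ≤ t := by
    have heq : lam ⟨1, by omega⟩ ^ (-(1:ℝ)/2) = (Real.sqrt (lam ⟨1, by omega⟩))⁻¹ := by
      rw [show (-(1:ℝ)/2) = -(1/2) by ring, Real.rpow_neg hlam1.le, Real.sqrt_eq_rpow]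
    rw [heq] at ht
    exact ht
  have ht1 : (1:ℝ) ≤ Real.sqrt (lam ⟨1, by omega⟩) * t := by
    calc (1:ℝ) = Real.sqrt (lam ⟨1, by omega⟩) * (Real.sqrt (lam ⟨1, by omega⟩))⁻¹ :=
          (mul_inv_cancel₀ hsq1.ne').symm
      _ ≤ _ := mul_le_mul_of_nonneg_left htinv hsq1.le
  have hkey : ∀ j, lam j ≠ 0 → 0 < Real.sqrt (lam j) ∧ 1 ≤ Real.sqrt (lam j) * t := by
    intro j hj
    have hj1 : (⟨1, by omega⟩ : Fin N) ≤ j := by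
      rcases Nat.eq_zero_or_pos j.val with h | h
      · exfalso
        exact hj (by rw [show j = (⟨0, by omega⟩ : Fin N) from Fin.ext h]; exact hlam0)
      · rw [Fin.le_def]; exact h
    have hlj : lam ⟨1, by omega⟩ ≤ lam j := hmono hj1
    have hsj : Real.sqrt (lam ⟨1, by omega⟩) ≤ Real.sqrt (lam j) := Real.sqrt_le_sqrt hlj
    exact ⟨lt_of_lt_of_le hsq1 hsj,
      le_trans ht1 (mul_le_mul_of_nonneg_right hsj htpos.le)⟩
  -- abbreviations
  set b : Fin N → ℝ := fun j => ‖star (u j) ⬝ᵥ f‖ ^ 2 with hb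
  have hbnn : ∀ j, 0 ≤ b j := fun j => sq_nonneg _
  set ind : Fin N → ℂ := fun j => if lam j = 0 then 1 else 0 with hind
  set g : Fin N → ℂ := (specOp u ind).mulVec f with hg
  set ω : ℝ := omegaMod u lam r f t with hω
  set κ : ℝ := (15/16:ℝ)^(2*r) * (1/2)^(2*r+1) / (2*r+1) / (2*Real.pi) with hκ
  have hκpos : 0 < κ := by rw [hκ]; positivity
  set S : ℝ := ∑ j, (if lam j = 0 then (0:ℝ) else 1) * b j with hS
  have hSnn : 0 ≤ S := Finset.sum_nonneg fun j _ =>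
    mul_nonneg (by split <;> norm_num) (hbnn j)
  -- Step 1: K ≤ ‖f - g‖
  have hzero : (Lpow u lam ((r : ℝ) / 2)).mulVec g = 0 := by
    rw [hg, Matrix.mulVec_mulVec, Lpow, specOp_mul u hu]
    have hfz : (fun j => ((lam j ^ ((r:ℝ)/2) : ℝ) : ℂ) * ind j) = fun _ => (0:ℂ) := by
      funext j
      by_cases hj : lam j = 0
      · rw [hj, Real.zero_rpow (show ((r:ℝ)/2) ≠ 0 from (by linarith : (0:ℝ) < (r:ℝ)/2).ne')]
        simp
      · simp [hind, hj]
    rw [hfz]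
    have : specOp u (fun _ => (0:ℂ)) = 0 := by
      simp [specOp]
    rw [this, Matrix.zero_mulVec]
  have hczero : cnorm2 (0 : Fin N → ℂ) = 0 := by
    simp [cnorm2]
  have hKle : Kfun u lam r f t ≤ cnorm2 (f - g) := by
    have hbdd : BddBelow (Set.range fun g : Fin N → ℂ =>
        cnorm2 (f - g) + (t / 2) ^ r * cnorm2 ((Lpow u lam ((r : ℝ) / 2)).mulVec g)) := by
      refine ⟨0, ?_⟩
      rintro x ⟨g', rfl⟩
      exact add_nonneg (cnorm2_nonneg _)
        (mul_nonneg (by positivity) (cnorm2_nonneg _))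
    calc Kfun u lam r f t
        ≤ cnorm2 (f - g) + (t / 2) ^ r * cnorm2 ((Lpow u lam ((r : ℝ) / 2)).mulVec g) :=
          ciInf_le hbdd g
      _ = cnorm2 (f - g) := by rw [hzero, hczero, mul_zero, add_zero]
  -- Step 2: ‖f - g‖² = S
  have hfg : f - g = (specOp u (fun j => 1 - ind j)).mulVec f := by
    conv_lhs => rw [show f = (specOp u 1).mulVec f by
      rw [specOp_one u hu, Matrix.one_mulVec]]
    rw [hg, ← Matrix.sub_mulVec, specOp_sub]
    rfl
  have hE2 : cnorm2 (f - g) ^ 2 = S := by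
    rw [hfg, cnorm2_sq, sum_normSq_specOp u hu, hS]
    refine Finset.sum_congr rfl fun j _ => ?_
    by_cases hj : lam j = 0 <;> simp [hind, hj, hb]
  -- Step 3: bounds for ω
  have hFle : ∀ s : {s : ℝ // |s| ≤ t}, cnorm2 (((Tmat u lam s.1 - 1) ^ r).mulVec f)
      ≤ Real.sqrt (∑ j, (4:ℝ)^r * b j) := by
    intro s
    apply Real.sqrt_le_sqrt
    rw [Tpow_normsum u hu lam r s.1 f]
    refine Finset.sum_le_sum fun j _ => ?_
    have h1 : Real.sin ((Real.sqrt (lam j)/2) * s.1) ^ (2*r) ≤ 1 := by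
      rw [pow_mul]
      exact pow_le_one₀ (sq_nonneg _) (Real.sin_sq_le_one _)
    calc (4:ℝ)^r * Real.sin ((Real.sqrt (lam j)/2) * s.1) ^ (2*r) * b j
        ≤ (4:ℝ)^r * 1 * b j :=
          mul_le_mul_of_nonneg_right
            (mul_le_mul_of_nonneg_left h1 (by positivity)) (hbnn j)
      _ = (4:ℝ)^r * b j := by ring
  have hBdd : BddAbove (Set.range fun s : {s : ℝ // |s| ≤ t} =>
      cnorm2 (((Tmat u lam s.1 - 1) ^ r).mulVec f)) :=
    ⟨Real.sqrt (∑ j, (4:ℝ)^r * b j), by rintro x ⟨s, rfl⟩; exact hFle s⟩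
  have hωge : ∀ s : {s : ℝ // |s| ≤ t},
      cnorm2 (((Tmat u lam s.1 - 1) ^ r).mulVec f) ≤ ω :=
    fun s => le_ciSup hBdd s
  have hωnn : 0 ≤ ω :=
    le_trans (cnorm2_nonneg _) (hωge ⟨0, by simpa using htpos.le⟩)
  -- Step 4: integral averaging
  set Φ : ℝ → ℝ := fun s =>
    ∑ j, (4:ℝ)^r * Real.sin ((Real.sqrt (lam j)/2) * s) ^ (2*r) * b j with hΦ
  have hΦcont : ∀ j : Fin N, Continuous fun s : ℝ =>
      (4:ℝ)^r * Real.sin ((Real.sqrt (lam j)/2) * s) ^ (2*r) * b j := fun j =>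
    (continuous_const.mul ((Real.continuous_sin.comp
      (continuous_const.mul continuous_id)).pow _)).mul continuous_const
  have hΦcont' : Continuous Φ := continuous_finset_sum _ fun j _ => hΦcont j
  have hint1 : (∫ s in (0:ℝ)..t, Φ s) ≤ t * ω^2 := by
    have hle : ∀ s ∈ Set.Icc (0:ℝ) t, Φ s ≤ ω^2 := by
      intro s hs
      have habs : |s| ≤ t := abs_le.mpr ⟨by linarith [hs.1], hs.2⟩
      have h1 : Φ s = cnorm2 (((Tmat u lam s - 1) ^ r).mulVec f) ^ 2 := by
        rw [cnorm2_sq, Tpow_normsum u hu lam r s f]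
      rw [h1]
      have h2 := hωge ⟨s, habs⟩
      nlinarith [cnorm2_nonneg (((Tmat u lam s - 1) ^ r).mulVec f)]
    have := intervalIntegral.integral_mono_on (μ := MeasureTheory.volume) htpos.le
      (hΦcont'.intervalIntegrable 0 t) (continuous_const.intervalIntegrable 0 t) hle
    rw [intervalIntegral.integral_const, smul_eq_mul, sub_zero] at this
    exact this
  have hint2 : (4:ℝ)^r * (t * κ) * S ≤ ∫ s in (0:ℝ)..t, Φ s := by
    have hsum : (∫ s in (0:ℝ)..t, Φ s)
        = ∑ j, ∫ s in (0:ℝ)..t,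
            (4:ℝ)^r * Real.sin ((Real.sqrt (lam j)/2) * s) ^ (2*r) * b j := by
      simp only [hΦ]
      exact intervalIntegral.integral_finset_sum
        (fun j _ => (hΦcont j).intervalIntegrable 0 t)
    rw [hsum]
    have hrw : (4:ℝ)^r * (t * κ) * S
        = ∑ j, (if lam j = 0 then (0:ℝ) else 1) * b j * ((4:ℝ)^r * (t * κ)) := by
      rw [hS, Finset.mul_sum]
      exact Finset.sum_congr rfl fun j _ => by ring
    rw [hrw]
    refine Finset.sum_le_sum fun j _ => ?_
    have hterm : (∫ s in (0:ℝ)..t, (4:ℝ)^r * Real.sin ((Real.sqrt (lam j)/2) * s) ^ (2*r) * b j)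
        = ((4:ℝ)^r * b j) * ∫ s in (0:ℝ)..t, Real.sin ((Real.sqrt (lam j)/2) * s) ^ (2*r) := by
      rw [← intervalIntegral.integral_const_mul]
      congr 1
      funext s
      ring
    rw [hterm]
    have hintnn : 0 ≤ ∫ s in (0:ℝ)..t, Real.sin ((Real.sqrt (lam j)/2) * s) ^ (2*r) :=
      intervalIntegral.integral_nonneg htpos.le fun s _ => sinpow_nonneg r _
    by_cases hj : lam j = 0
    · rw [if_pos hj, zero_mul, zero_mul]
      exact mul_nonneg (mul_nonneg (by positivity) (hbnn j)) hintnn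
    · rw [if_neg hj]
      obtain ⟨hθpos, hθt⟩ := hkey j hj
      have hosc := osc_lower r hθpos hθt
      rw [hκ]
      calc 1 * b j * ((4:ℝ)^r * (t * ((15/16:ℝ)^(2*r) * (1/2)^(2*r+1) / (2*r+1) / (2*Real.pi))))
          = ((4:ℝ)^r * b j) *
            (t * ((15/16:ℝ)^(2*r) * (1/2)^(2*r+1) / (2*r+1) / (2*Real.pi))) := by ring
        _ ≤ ((4:ℝ)^r * b j) * ∫ s in (0:ℝ)..t, Real.sin ((Real.sqrt (lam j)/2) * s) ^ (2*r) :=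
            mul_le_mul_of_nonneg_left hosc (mul_nonneg (by positivity) (hbnn j))
  have hSω : (4:ℝ)^r * κ * S ≤ ω^2 := by
    have h := le_trans hint2 hint1
    have h2 : t * ((4:ℝ)^r * κ * S) ≤ t * ω^2 := by linarith [h]
    exact le_of_mul_le_mul_left h2 htpos
  -- Step 5: conclude
  set c0 : ℝ := 2 * (16/15:ℝ)^r * Real.sqrt (Real.pi * (2*r+1)) with hc0
  have hc0nn : 0 ≤ c0 := by positivity
  have hκval : (4:ℝ)^r * κ * c0^2 = 1 := by
    have h4 : (4:ℝ)^r = 2^(2*r) := by rw [pow_mul]; norm_num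
    have hA : ((15:ℝ)/16)^(2*r) * ((16:ℝ)/15)^(2*r) = 1 := by
      rw [← mul_pow]; norm_num
    have hB : (2:ℝ)^(2*r) * ((1:ℝ)/2)^(2*r+1) = 1/2 := by
      rw [pow_succ, ← mul_assoc, ← mul_pow]; norm_num
    have hne1 : ((2:ℝ)*(r:ℝ)+1) ≠ 0 := by positivity
    calc (4:ℝ)^r * κ * c0^2
        = ((2:ℝ)^(2*r) * ((1:ℝ)/2)^(2*r+1)) *
            (((15:ℝ)/16)^(2*r) * (((16:ℝ)/15)^r * ((16:ℝ)/15)^r)) *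
            (4 * (Real.pi * (2*(r:ℝ)+1)) * ((2*(r:ℝ)+1)⁻¹ * (2*Real.pi)⁻¹)) := by
          rw [hκ, hc0, mul_pow, mul_pow, Real.sq_sqrt (by positivity), h4]
          ring
      _ = ((2:ℝ)^(2*r) * ((1:ℝ)/2)^(2*r+1)) *
            (((15:ℝ)/16)^(2*r) * ((16:ℝ)/15)^(2*r)) *
            (4 * (Real.pi * (2*(r:ℝ)+1)) * ((2*(r:ℝ)+1)⁻¹ * (2*Real.pi)⁻¹)) := by
          rw [← pow_add, two_mul]
      _ = (1/2) * 1 *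
            (4 * (Real.pi * (2*(r:ℝ)+1)) * ((2*(r:ℝ)+1)⁻¹ * (2*Real.pi)⁻¹)) := by
          rw [hA, hB]
      _ = 1 := by
          field_simp
          ring
  have hSc0 : S ≤ (c0 * ω)^2 := by
    calc S = ((4:ℝ)^r * κ * c0^2) * S := by rw [hκval, one_mul]
      _ = c0^2 * ((4:ℝ)^r * κ * S) := by ring
      _ ≤ c0^2 * ω^2 := mul_le_mul_of_nonneg_left hSω (sq_nonneg c0)
      _ = (c0*ω)^2 := by ring
  have hEc0 : cnorm2 (f - g) ≤ c0 * ω := by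
    have h1 : cnorm2 (f - g) ^ 2 ≤ (c0 * ω)^2 := by rw [hE2]; exact hSc0
    nlinarith [cnorm2_nonneg (f - g), mul_nonneg hc0nn hωnn]
  have hnum : c0 ≤ 4 / Real.pi * ((r : ℝ) + 3) ^ r * ((r : ℝ) + 1) := by
    have hs1 : Real.sqrt (Real.pi * (2*r+1)) ≤ 2*((r:ℝ)+1) := by
      rw [show (2*((r:ℝ)+1)) = Real.sqrt ((2*((r:ℝ)+1))^2) from
        (Real.sqrt_sq (by positivity)).symm]
      apply Real.sqrt_le_sqrt
      nlinarith [Real.pi_le_four, sq_nonneg (r:ℝ)]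
    have h2 : c0 ≤ 4 * (16/15:ℝ)^r * ((r:ℝ)+1) := by
      rw [hc0]
      have hmul := mul_le_mul_of_nonneg_left hs1
        (show (0:ℝ) ≤ 2*(16/15:ℝ)^r by positivity)
      calc 2 * (16/15:ℝ)^r * Real.sqrt (Real.pi * (2*r+1))
          = (2*(16/15:ℝ)^r) * Real.sqrt (Real.pi * (2*r+1)) := by ring
        _ ≤ (2*(16/15:ℝ)^r) * (2*((r:ℝ)+1)) := hmul
        _ = 4 * (16/15:ℝ)^r * ((r:ℝ)+1) := by ring
    have h3 : Real.pi * (16/15:ℝ)^r ≤ ((r:ℝ)+3)^r := by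
      have ha : ((15:ℝ)/4) ≤ ((15:ℝ)/4)^r := le_self_pow₀ (by norm_num) (by omega)
      have hb : (0:ℝ) < (16/15:ℝ)^r := pow_pos (by norm_num) r
      calc Real.pi * (16/15:ℝ)^r ≤ (15/4) * (16/15:ℝ)^r :=
            mul_le_mul_of_nonneg_right
              (le_trans Real.pi_lt_d2.le (by norm_num)) hb.le
        _ ≤ ((15:ℝ)/4)^r * (16/15:ℝ)^r := mul_le_mul_of_nonneg_right ha hb.le
        _ = 4^r := by rw [← mul_pow]; norm_num
        _ ≤ ((r:ℝ)+3)^r := pow_le_pow_left₀ (by norm_num) (by linarith) r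
    have h4 : 4 * (16/15:ℝ)^r ≤ 4 / Real.pi * ((r:ℝ)+3)^r := by
      rw [div_mul_eq_mul_div, le_div_iff₀ hpi]
      linarith [h3]
    have := mul_le_mul_of_nonneg_right h4 (show (0:ℝ) ≤ (r:ℝ)+1 by linarith)
    calc c0 ≤ 4 * (16/15:ℝ)^r * ((r:ℝ)+1) := h2
      _ ≤ (4 / Real.pi * ((r:ℝ)+3)^r) * ((r:ℝ)+1) := by linarith [this]
      _ = 4 / Real.pi * ((r:ℝ)+3)^r * ((r:ℝ)+1) := by ring
  have hpos2 : (0:ℝ) ≤ ((2 * Real.sin (1 / 2))⁻¹) ^ r := by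
    have hsin : 0 < Real.sin (1/2) :=
      Real.sin_pos_of_pos_of_lt_pi (by norm_num) (by nlinarith [Real.pi_gt_three])
    positivity
  calc Kfun u lam r f t ≤ cnorm2 (f - g) := hKle
    _ ≤ c0 * ω := hEc0
    _ ≤ (4 / Real.pi * ((r : ℝ) + 3) ^ r * ((r : ℝ) + 1)
          + ((2 * Real.sin (1 / 2))⁻¹) ^ r) * ω := by
        apply mul_le_mul_of_nonneg_right _ hωnn
        linarith [hnum, hpos2]
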